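/- Fix a natural number k. Let B_k be the poset of pairs (n,m) ∈ ℕ × ℕ with n + m ≥ k, and let A_k ⊆ B_k be the full subposet of pairs with k ≤ n + m ≤ k + 1, both equipped with the order (n,m) ⪯ (n',m') if and only if n' ≤ n and m' ≤ m. Then the inclusion functor from the poset category of A_k to the poset category of B_k is a final (colimit-cofinal) functor. -/

import Mathlib

open CategoryTheory

/-- The poset `B_k` of pairs `(n,m) ∈ ℕ × ℕ` with `n + m ≥ k`. -/
def MayIndexB (k : ℕ) : Type := {p : ℕ × ℕ // k ≤ p.1 + p.2}

/-- The poset `A_k` of pairs `(n,m) ∈ ℕ × ℕ` with `k ≤ n + m ≤ k + 1`. -/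
def MayIndexA (k : ℕ) : Type := {p : ℕ × ℕ // k ≤ p.1 + p.2 ∧ p.1 + p.2 ≤ k + 1}

/-- The order `(n,m) ⪯ (n',m')` iff `n' ≤ n` and `m' ≤ m` (opposite of componentwise). -/
instance (k : ℕ) : Preorder (MayIndexB k) where
  le x y := y.1.1 ≤ x.1.1 ∧ y.1.2 ≤ x.1.2
  le_refl x := ⟨le_refl _, le_refl _⟩
  le_trans x y z h₁ h₂ := ⟨h₂.1.trans h₁.1, h₂.2.trans h₁.2⟩

instance (k : ℕ) : Preorder (MayIndexA k) where
  le x y := y.1.1 ≤ x.1.1 ∧ y.1.2 ≤ x.1.2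
  le_refl x := ⟨le_refl _, le_refl _⟩
  le_trans x y z h₁ h₂ := ⟨h₂.1.trans h₁.1, h₂.2.trans h₁.2⟩

/-- The inclusion functor `A_k ⥤ B_k`. -/
def mayIncl (k : ℕ) : MayIndexA k ⥤ MayIndexB k :=
  Monotone.functor (f := fun x => (⟨x.1, x.2.1⟩ : MayIndexB k)) (fun _ _ h => h)


def mayA (k x y : ℕ) (h1 : k ≤ x + y) (h2 : x + y ≤ k + 1) : MayIndexA k := ⟨(x, y), h1, h2⟩

def mayObj (k : ℕ) (b : MayIndexB k) (x y : ℕ) (h1 : k ≤ x + y) (h2 : x + y ≤ k + 1)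
    (hx : x ≤ b.1.1) (hy : y ≤ b.1.2) : StructuredArrow b (mayIncl k) :=
  StructuredArrow.mk (S := b) (T := mayIncl k) (Y := mayA k x y h1 h2) ⟨⟨⟨hx, hy⟩⟩⟩

def mayHom {k : ℕ} {b : MayIndexB k} (j₁ j₂ : StructuredArrow b (mayIncl k))
    (h : j₂.right.1.1 ≤ j₁.right.1.1 ∧ j₂.right.1.2 ≤ j₁.right.1.2) : j₁ ⟶ j₂ :=
  StructuredArrow.homMk (homOfLE h) (Subsingleton.elim _ _)

/-- The inclusion `A_k ⊆ B_k` is a final (colimit-cofinal) functor. -/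
theorem mayIncl_final (k : ℕ) : (mayIncl k).Final := by
  constructor
  intro b
  obtain ⟨⟨n, m⟩, hb⟩ := b
  simp only at hb
  set b : MayIndexB k := ⟨(n, m), hb⟩ with hbdef
  haveI : Nonempty (StructuredArrow b (mayIncl k)) :=
    ⟨mayObj k b (min n k) (k - min n k) (by omega) (by omega)
      (by exact (by omega : min n k ≤ n)) (by exact (by omega : k - min n k ≤ m))⟩
  apply zigzag_isConnected
  -- chain among sum-k elements, moving first coordinate up by d
  have chain : ∀ d x y, x + y = k → d ≤ y → x + d ≤ n → y ≤ m →
      ∀ (h1 : k ≤ x + y) (h2 : x + y ≤ k + 1) (hx : x ≤ b.1.1) (hy : y ≤ b.1.2)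
        (h1' : k ≤ x + d + (y - d)) (h2' : x + d + (y - d) ≤ k + 1)
        (hx' : x + d ≤ b.1.1) (hy' : y - d ≤ b.1.2),
      Zigzag (mayObj k b x y h1 h2 hx hy) (mayObj k b (x + d) (y - d) h1' h2' hx' hy') := by
    intro d
    induction d with
    | zero =>
      intro x y hsum hdd hx hy h1 h2 hx1 hy1 h1' h2' hx' hy'
      simp only [Nat.add_zero, Nat.sub_zero]
      exact Relation.ReflTransGen.refl
    | succ d ih =>
      intro x y hsum hd hx hy h1 h2 hx1 hy1 h1' h2' hx' hy'
      have hmid : (x + 1 : ℕ) ≤ b.1.1 := by exact (by omega : x + 1 ≤ n)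
      have hz1 : Zag (mayObj k b x y h1 h2 hx1 hy1)
          (mayObj k b (x+1) y (by omega) (by omega) hmid hy1) :=
        Or.inr ⟨mayHom _ _ ⟨by exact Nat.le_succ x, by exact le_refl y⟩⟩
      have hz2 : Zag (mayObj k b (x+1) y (by omega) (by omega) hmid hy1)
          (mayObj k b (x+1) (y-1) (by omega) (by omega) hmid
            (by exact (by omega : y - 1 ≤ m))) :=
        Or.inl ⟨mayHom _ _ ⟨by exact le_refl (x+1), by exact (by omega : y - 1 ≤ y)⟩⟩
      have hrest := ih (x+1) (y-1) (by omega) (by omega) (by omega) (by omega)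
        (by omega) (by omega) hmid (by exact (by omega : y - 1 ≤ m))
        (by omega) (by omega) (by exact (by omega : x + 1 + d ≤ n))
        (by exact (by omega : y - 1 - d ≤ m))
      have step : Zigzag (mayObj k b x y h1 h2 hx1 hy1)
          (mayObj k b (x+1+d) (y-1-d) (by omega) (by omega)
            (by exact (by omega : x + 1 + d ≤ n)) (by exact (by omega : y - 1 - d ≤ m))) :=
        Relation.ReflTransGen.trans (Relation.ReflTransGen.trans
          (Relation.ReflTransGen.single hz1) (Relation.ReflTransGen.single hz2)) hrest
      convert step using 2 <;> omega
  -- connect any two sum-k objects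
  have conn : ∀ x y x' y', x + y = k → x' + y' = k → x ≤ n → y ≤ m → x' ≤ n → y' ≤ m →
      ∀ (h1 h2 hx hy h1' h2' hx' hy'),
      Zigzag (mayObj k b x y h1 h2 hx hy) (mayObj k b x' y' h1' h2' hx' hy') := by
    intro x y x' y' hs hs' hxn hym hxn' hym' h1 h2 hx hy h1' h2' hx' hy'
    rcases le_total x x' with hle | hle
    · have := chain (x' - x) x y hs (by omega) (by omega) hym h1 h2 hx hy
        (by omega) (by omega) (by exact (by omega : x + (x' - x) ≤ n))
        (by exact (by omega : y - (x' - x) ≤ m))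
      convert this using 2 <;> omega
    · have := chain (x - x') x' y' hs' (by omega) (by omega) hym' h1' h2' hx' hy'
        (by omega) (by omega) (by exact (by omega : x' + (x - x') ≤ n))
        (by exact (by omega : y' - (x - x') ≤ m))
      apply zigzag_symmetric.symm
      convert this using 2 <;> omega
  -- reduce any object to a sum-k object
  have red : ∀ x y (h1 : k ≤ x + y) (h2 : x + y ≤ k + 1) (hx : x ≤ b.1.1) (hy : y ≤ b.1.2),
      ∃ x' y', ∃ hs : x' + y' = k, ∃ hx' : x' ≤ n, ∃ hy' : y' ≤ m,
        Zigzag (mayObj k b x y h1 h2 hx hy)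
          (mayObj k b x' y' (le_of_eq hs.symm) (by omega) hx' hy') := by
    intro x y h1 h2 hx hy
    have hxn : x ≤ n := hx
    have hym : y ≤ m := hy
    rcases Nat.eq_or_lt_of_le h1 with heq | hlt
    · exact ⟨x, y, heq.symm, hxn, hym, Relation.ReflTransGen.refl⟩
    · rcases Nat.eq_zero_or_pos y with hy0 | hy0
      · refine ⟨x - 1, y, by omega, by omega, hym, Relation.ReflTransGen.single ?_⟩
        exact Or.inl ⟨mayHom _ _ ⟨by exact (by omega : x - 1 ≤ x), by exact le_refl y⟩⟩
      · refine ⟨x, y - 1, by omega, hxn, by omega, Relation.ReflTransGen.single ?_⟩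
        exact Or.inl ⟨mayHom _ _ ⟨by exact le_refl x, by exact (by omega : y - 1 ≤ y)⟩⟩
  -- main goal
  intro j₁ j₂
  obtain ⟨⟨⟨⟩⟩, ⟨⟨x₁, y₁⟩, ha₁, ha₁'⟩, ⟨⟨hf₁⟩⟩⟩ := j₁
  obtain ⟨⟨⟨⟩⟩, ⟨⟨x₂, y₂⟩, ha₂, ha₂'⟩, ⟨⟨hf₂⟩⟩⟩ := j₂
  simp only at ha₁ ha₁' ha₂ ha₂'
  obtain ⟨hx₁, hy₁⟩ := hf₁
  obtain ⟨hx₂, hy₂⟩ := hf₂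
  show Zigzag (mayObj k b x₁ y₁ ha₁ ha₁' hx₁ hy₁) (mayObj k b x₂ y₂ ha₂ ha₂' hx₂ hy₂)
  obtain ⟨x₁', y₁', hs₁, hx₁', hy₁', hz₁⟩ := red x₁ y₁ ha₁ ha₁' hx₁ hy₁
  obtain ⟨x₂', y₂', hs₂, hx₂', hy₂', hz₂⟩ := red x₂ y₂ ha₂ ha₂' hx₂ hy₂
  exact (hz₁.trans (conn x₁' y₁' x₂' y₂' hs₁ hs₂ hx₁' hy₁' hx₂' hy₂' _ _ _ _ _ _ _ _)).trans
    (zigzag_symmetric.symm _ _ hz₂)
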